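/- arXiv:1107.4677 — 4 statements merged into one kernel-verified Lean document; each statement's English description precedes it below -/
import Mathlib

section
/- Let c : ℕ → ℝ be finitely supported, m ≥ 1, λ an m-th root of unity with λ ≠ 1, and suppose ∑_i c_i i^k λ^i = 0 for all 0 ≤ k ≤ K. Then for each l with 0 ≤ l ≤ K, the polynomial function f(η) = ∑_i c_i i^l λ^i η^i (a finite sum over the support of c) vanishes to order at least K − l + 1 at η = 1; that is, f and its first K − l derivatives all vanish at η = 1. -/
open Polynomial Finset in
lemma momA (c : ℕ →₀ ℝ) (K : ℕ) (ζ : ℂ)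
    (hmom : ∀ k ≤ K, ∑ i ∈ c.support, (c i : ℂ) * (i : ℂ) ^ k * ζ ^ i = 0)
    (P : ℂ[X]) (hP : P.natDegree ≤ K) :
    ∑ i ∈ c.support, (c i : ℂ) * P.eval (i : ℂ) * ζ ^ i = 0 := by
  have heval : ∀ i : ℕ, P.eval (i : ℂ) = ∑ k ∈ range (K + 1), P.coeff k * (i : ℂ) ^ k := by
    intro i
    exact P.eval_eq_sum_range' (lt_of_le_of_lt hP (Nat.lt_succ_self K)) _
  calc ∑ i ∈ c.support, (c i : ℂ) * P.eval (i : ℂ) * ζ ^ i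
      = ∑ i ∈ c.support, ∑ k ∈ range (K + 1),
          P.coeff k * ((c i : ℂ) * (i : ℂ) ^ k * ζ ^ i) := by
        refine Finset.sum_congr rfl fun i _ => ?_
        rw [heval i, Finset.mul_sum, Finset.sum_mul]
        refine Finset.sum_congr rfl fun k _ => ?_
        ring
    _ = ∑ k ∈ range (K + 1), P.coeff k *
          ∑ i ∈ c.support, (c i : ℂ) * (i : ℂ) ^ k * ζ ^ i := by
        rw [Finset.sum_comm]
        simp [Finset.mul_sum]
    _ = 0 := by
        refine Finset.sum_eq_zero fun k hk => ?_
        rw [hmom k (Nat.lt_succ_iff.mp (Finset.mem_range.mp hk)), mul_zero]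

theorem stmt2 (c : ℕ →₀ ℝ) (m K : ℕ) (hm : 1 ≤ m) (ζ : ℂ)
    (hζ : ζ ^ m = 1) (hζ1 : ζ ≠ 1)
    (hmom : ∀ k ≤ K, ∑ i ∈ c.support, (c i : ℂ) * (i : ℂ) ^ k * ζ ^ i = 0)
    (l : ℕ) (hl : l ≤ K) :
    ∀ j ≤ K - l,
      (Polynomial.derivative^[j]
        (∑ i ∈ c.support,
          Polynomial.C ((c i : ℂ) * (i : ℂ) ^ l * ζ ^ i) * Polynomial.X ^ i)).eval 1 = 0 := by
  intro j hj
  rw [Polynomial.iterate_derivative_sum, Polynomial.eval_finset_sum]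
  have key : ∀ i ∈ c.support,
      (Polynomial.derivative^[j]
        (Polynomial.C ((c i : ℂ) * (i : ℂ) ^ l * ζ ^ i) * Polynomial.X ^ i)).eval 1
      = (c i : ℂ) * (i : ℂ) ^ l * ζ ^ i * (i.descFactorial j : ℂ) := by
    intro i _
    rw [Polynomial.iterate_derivative_C_mul, Polynomial.iterate_derivative_X_pow_eq_natCast_mul]
    simp [mul_comm]
  rw [Finset.sum_congr rfl key]
  have hdeg : (Polynomial.X ^ l * descPochhammer ℂ j).natDegree ≤ K := by
    rw [Polynomial.natDegree_mul (pow_ne_zero _ Polynomial.X_ne_zero) (Polynomial.Monic.ne_zero (monic_descPochhammer ℂ j)),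
      Polynomial.natDegree_X_pow, descPochhammer_natDegree]
    omega
  have := momA c K ζ hmom (Polynomial.X ^ l * descPochhammer ℂ j) hdeg
  rw [← this]
  refine Finset.sum_congr rfl fun i _ => ?_
  rw [Polynomial.eval_mul, Polynomial.eval_pow, Polynomial.eval_X,
    descPochhammer_eval_eq_descFactorial]
  ring
end

section
/- Let P : ℝ^k → ℝ be a polynomial of degree ≤ d and c > 0. For every derivative order r' ≥ 0 there exists C > 0 such that for all integers p ≥ 1 and all z ∈ ℝ^k, every partial derivative of order ≤ r' (in z) of the function z ↦ P(√p·z)·e^{−c·p·|z|²} is bounded in absolute value by C · p^{r'/2} · e^{−(c/2)·p·|z|²}. -/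
section Aux

variable {E : Type*} [NormedAddCommGroup E] [InnerProductSpace ℝ E]


lemma fderiv_id_fun : (fderiv ℝ (fun y : E => y)) = fun _ => ContinuousLinearMap.id ℝ E :=
  funext fun _ => fderiv_id'

lemma id_hd_zero (m : ℕ) (hm : 2 ≤ m) (x : E) : iteratedFDeriv ℝ m (fun y : E => y) x = 0 := by
  obtain ⟨l, rfl⟩ : ∃ l, m = l + 1 := ⟨m - 1, by omega⟩
  have : ‖iteratedFDeriv ℝ (l + 1) (fun y : E => y) x‖ = 0 := by
    rw [← norm_iteratedFDeriv_fderiv, fderiv_id_fun, iteratedFDeriv_const_of_ne (by omega)]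
    simp
  simpa using norm_eq_zero.mp this

lemma id_hd_one (x : E) : ‖iteratedFDeriv ℝ 1 (fun y : E => y) x‖ ≤ 1 := by
  rw [show (1:ℕ) = 0 + 1 from rfl, ← norm_iteratedFDeriv_fderiv, fderiv_id_fun,
    norm_iteratedFDeriv_zero]
  exact ContinuousLinearMap.norm_id_le

lemma normsq_deriv_bound (x : E) (i : ℕ) (hi : 1 ≤ i) :
    ‖iteratedFDeriv ℝ i (fun y : E => ‖y‖ ^ 2) x‖ ≤ 2 * (1 + ‖x‖) := by
  have hq : (fun y : E => ‖y‖ ^ 2) = fun y => (innerSL ℝ (E := E)) y y := by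
    funext y; simp [real_inner_self_eq_norm_sq]
  rw [hq]
  have hb := (innerSL ℝ (E := E)).norm_iteratedFDeriv_le_of_bilinear_of_le_one
    (f := fun y : E => y) (g := fun y : E => y) (N := (⊤ : ℕ∞)) contDiff_id contDiff_id x
    (n := i) (by exact_mod_cast le_top) (norm_innerSL_le ℝ)
  refine hb.trans ?_
  have hx : (0:ℝ) ≤ ‖x‖ := norm_nonneg x
  match i, hi with
  | 1, _ =>
    rw [Finset.sum_range_succ, Finset.sum_range_succ, Finset.sum_range_zero]
    have h0 : ‖iteratedFDeriv ℝ 0 (fun y : E => y) x‖ = ‖x‖ := norm_iteratedFDeriv_zero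
    have h1 := id_hd_one x
    have h1' : (0:ℝ) ≤ ‖iteratedFDeriv ℝ 1 (fun y : E => y) x‖ := norm_nonneg _
    simp only [Nat.choose_self, Nat.choose_zero_right, Nat.cast_one, one_mul, Nat.sub_self,
      Nat.sub_zero, h0]
    nlinarith
  | 2, _ =>
    rw [Finset.sum_range_succ, Finset.sum_range_succ, Finset.sum_range_succ,
      Finset.sum_range_zero]
    have h0 : ‖iteratedFDeriv ℝ 0 (fun y : E => y) x‖ = ‖x‖ := norm_iteratedFDeriv_zero
    have h2 : iteratedFDeriv ℝ 2 (fun y : E => y) x = 0 := id_hd_zero 2 le_rfl x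
    have h1 := id_hd_one x
    have h1' : (0:ℝ) ≤ ‖iteratedFDeriv ℝ 1 (fun y : E => y) x‖ := norm_nonneg _
    simp only [h2, norm_zero, h0, Nat.sub_self, Nat.sub_zero]
    norm_num
    have h1'' : ‖iteratedFDeriv ℝ (2 - 1) (fun y : E => y) x‖ ≤ 1 := h1
    have hid := ContinuousLinearMap.norm_id_le (𝕜 := ℝ) (E := E)
    nlinarith [mul_le_mul hid h1'' (norm_nonneg _) zero_le_one]
  | (l+3), _ =>
    have : ∀ j ∈ Finset.range (l + 3 + 1),
        (((l+3).choose j : ℝ)) * ‖iteratedFDeriv ℝ j (fun y : E => y) x‖ *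
          ‖iteratedFDeriv ℝ (l + 3 - j) (fun y : E => y) x‖ = 0 := by
      intro j hj
      rcases le_or_gt 2 j with h | h
      · rw [id_hd_zero j h x]; simp
      · rw [id_hd_zero (l + 3 - j) (by omega) x]; simp
    rw [Finset.sum_eq_zero this]
    nlinarith

lemma gauss_deriv_bound (c : ℝ) (hc : 0 < c) (n : ℕ) (x : E) :
    ‖iteratedFDeriv ℝ n (fun y : E => Real.exp (-c * ‖y‖ ^ 2)) x‖ ≤
      (n.factorial : ℝ) * (max 1 c) ^ n * (2 * (1 + ‖x‖)) ^ n * Real.exp (-c * ‖x‖ ^ 2) := by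
  have hgq : (fun y : E => Real.exp (-c * ‖y‖ ^ 2)) =
      (fun t : ℝ => Real.exp (-c * t)) ∘ (fun y : E => ‖y‖ ^ 2) := rfl
  have hg : ContDiff ℝ (⊤ : ℕ∞) (fun t : ℝ => Real.exp (-c * t)) :=
    Real.contDiff_exp.comp (contDiff_const.mul contDiff_id)
  have hf : ContDiff ℝ (⊤ : ℕ∞) (fun y : E => ‖y‖ ^ 2) := contDiff_norm_sq ℝ
  have key := norm_iteratedFDeriv_comp_le (n := n) (N := ((⊤ : ℕ∞) : WithTop ℕ∞)) hg hf
    (by exact_mod_cast le_top) x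
    (C := (max 1 c) ^ n * Real.exp (-c * ‖x‖ ^ 2)) (D := 2 * (1 + ‖x‖)) ?_ ?_
  · rw [hgq]
    calc ‖iteratedFDeriv ℝ n ((fun t : ℝ => Real.exp (-c * t)) ∘ fun y : E => ‖y‖ ^ 2) x‖ ≤
        (n.factorial : ℝ) * ((max 1 c) ^ n * Real.exp (-c * ‖x‖ ^ 2)) * (2 * (1 + ‖x‖)) ^ n := key
      _ = (n.factorial : ℝ) * (max 1 c) ^ n * (2 * (1 + ‖x‖)) ^ n * Real.exp (-c * ‖x‖ ^ 2) := by ring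
  · intro i hi
    rw [norm_iteratedFDeriv_eq_norm_iteratedDeriv, iteratedDeriv_exp_const_mul]
    rw [Real.norm_eq_abs, abs_mul, abs_pow, abs_neg, abs_of_pos hc, Real.abs_exp]
    have h1 : c ^ i ≤ (max 1 c) ^ n := by
      calc c ^ i ≤ (max 1 c) ^ i := pow_le_pow_left₀ hc.le (le_max_right 1 c) i
        _ ≤ (max 1 c) ^ n := pow_le_pow_right₀ (le_max_left 1 c) hi
    exact mul_le_mul_of_nonneg_right h1 (Real.exp_pos _).le
  · intro i hi1 hin
    have hD : (1:ℝ) ≤ 2 * (1 + ‖x‖) := by nlinarith [norm_nonneg x]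
    calc ‖iteratedFDeriv ℝ i (fun y : E => ‖y‖ ^ 2) x‖ ≤ 2 * (1 + ‖x‖) :=
          normsq_deriv_bound x i hi1
      _ ≤ (2 * (1 + ‖x‖)) ^ i := le_self_pow₀ hD (by omega)

-- temperate growth closure
lemma tg_mul {f g : E → ℝ} (hf : Function.HasTemperateGrowth f)
    (hg : Function.HasTemperateGrowth g) :
    Function.HasTemperateGrowth (fun x => f x * g x) := by
  refine ⟨hf.1.mul hg.1, fun n => ?_⟩
  obtain ⟨kf, Cf, hCf0, hCf⟩ := hf.norm_iteratedFDeriv_le_uniform n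
  obtain ⟨kg, Cg, hCg0, hCg⟩ := hg.norm_iteratedFDeriv_le_uniform n
  refine ⟨kf + kg, 2 ^ n * (Cf * Cg), fun x => ?_⟩
  have hx1 : (1:ℝ) ≤ 1 + ‖x‖ := by linarith [norm_nonneg x]
  have key := norm_iteratedFDeriv_mul_le (𝕜 := ℝ) (N := ((⊤ : ℕ∞) : WithTop ℕ∞)) hf.1 hg.1 x
    (n := n) (by exact_mod_cast le_top)
  refine key.trans ?_
  have hterm : ∀ i ∈ Finset.range (n + 1),
      (n.choose i : ℝ) * ‖iteratedFDeriv ℝ i f x‖ * ‖iteratedFDeriv ℝ (n - i) g x‖ ≤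
        (n.choose i : ℝ) * (Cf * Cg * (1 + ‖x‖) ^ (kf + kg)) := by
    intro i hi
    have h1 := hCf i (by have := Finset.mem_range.mp hi; omega) x
    have h2 := hCg (n - i) (by omega) x
    have := mul_le_mul h1 h2 (norm_nonneg _) (by positivity)
    calc (n.choose i : ℝ) * ‖iteratedFDeriv ℝ i f x‖ * ‖iteratedFDeriv ℝ (n - i) g x‖
        = (n.choose i : ℝ) * (‖iteratedFDeriv ℝ i f x‖ * ‖iteratedFDeriv ℝ (n - i) g x‖) := by ring
      _ ≤ (n.choose i : ℝ) * (Cf * (1 + ‖x‖) ^ kf * (Cg * (1 + ‖x‖) ^ kg)) := by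
          exact mul_le_mul_of_nonneg_left this (by positivity)
      _ = (n.choose i : ℝ) * (Cf * Cg * (1 + ‖x‖) ^ (kf + kg)) := by rw [pow_add]; ring
  calc (∑ i ∈ Finset.range (n + 1),
        (n.choose i : ℝ) * ‖iteratedFDeriv ℝ i f x‖ * ‖iteratedFDeriv ℝ (n - i) g x‖)
      ≤ ∑ i ∈ Finset.range (n + 1), (n.choose i : ℝ) * (Cf * Cg * (1 + ‖x‖) ^ (kf + kg)) :=
        Finset.sum_le_sum hterm
    _ = (∑ i ∈ Finset.range (n + 1), (n.choose i : ℝ)) * (Cf * Cg * (1 + ‖x‖) ^ (kf + kg)) := by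
        rw [← Finset.sum_mul]
    _ = (2 ^ n : ℝ) * (Cf * Cg * (1 + ‖x‖) ^ (kf + kg)) := by
        norm_cast; rw [Nat.sum_range_choose]
    _ = 2 ^ n * (Cf * Cg) * (1 + ‖x‖) ^ (kf + kg) := by ring

lemma tg_add {f g : E → ℝ} (hf : Function.HasTemperateGrowth f)
    (hg : Function.HasTemperateGrowth g) :
    Function.HasTemperateGrowth (fun x => f x + g x) := by
  refine ⟨hf.1.add hg.1, fun n => ?_⟩
  obtain ⟨kf, Cf, hCf⟩ := hf.2 n
  obtain ⟨kg, Cg, hCg⟩ := hg.2 n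
  refine ⟨max kf kg, max Cf 0 + max Cg 0, fun x => ?_⟩
  have hx1 : (1:ℝ) ≤ 1 + ‖x‖ := by linarith [norm_nonneg x]
  have hadd : iteratedFDeriv ℝ n (fun x => f x + g x) x =
      iteratedFDeriv ℝ n f x + iteratedFDeriv ℝ n g x := by
    have := fun_iteratedFDeriv_add_apply (i := n) (f := f) (g := g) (x := x)
      (hf.1.contDiffAt.of_le (by exact_mod_cast le_top)) (hg.1.contDiffAt.of_le (by exact_mod_cast le_top))
    exact this
  rw [hadd]
  have b1 : ‖iteratedFDeriv ℝ n f x‖ ≤ max Cf 0 * (1 + ‖x‖) ^ max kf kg :=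
    (hCf x).trans (mul_le_mul (le_max_left _ _) (pow_le_pow_right₀ hx1 (le_max_left _ _))
      (by positivity) (le_max_right _ _))
  have b2 : ‖iteratedFDeriv ℝ n g x‖ ≤ max Cg 0 * (1 + ‖x‖) ^ max kf kg :=
    (hCg x).trans (mul_le_mul (le_max_left _ _) (pow_le_pow_right₀ hx1 (le_max_right _ _))
      (by positivity) (le_max_right _ _))
  calc ‖iteratedFDeriv ℝ n f x + iteratedFDeriv ℝ n g x‖ ≤
      ‖iteratedFDeriv ℝ n f x‖ + ‖iteratedFDeriv ℝ n g x‖ := norm_add_le _ _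
    _ ≤ max Cf 0 * (1 + ‖x‖) ^ max kf kg + max Cg 0 * (1 + ‖x‖) ^ max kf kg := by linarith
    _ = (max Cf 0 + max Cg 0) * (1 + ‖x‖) ^ max kf kg := by ring

lemma poly_tg (k : ℕ) (P : MvPolynomial (Fin k) ℝ) :
    Function.HasTemperateGrowth
      (fun w : EuclideanSpace ℝ (Fin k) => MvPolynomial.eval (fun a => w a) P) := by
  induction P using MvPolynomial.induction_on with
  | C a =>
    simpa [MvPolynomial.eval_C] using
      Function.HasTemperateGrowth.const (E := EuclideanSpace ℝ (Fin k)) a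
  | add p q hp hq => simpa [MvPolynomial.eval_add] using tg_add hp hq
  | mul_X p n hp =>
    have hproj : Function.HasTemperateGrowth (fun w : EuclideanSpace ℝ (Fin k) => w n) := by
      simpa using (EuclideanSpace.proj (𝕜 := ℝ) (ι := Fin k) n).hasTemperateGrowth
    simpa [MvPolynomial.eval_mul, MvPolynomial.eval_X] using tg_mul hp hproj

lemma exp_poly_bound (M : ℕ) (c : ℝ) (hc : 0 < c) (t : ℝ) (ht : 0 ≤ t) :
    (1 + t) ^ M ≤ Real.exp ((M : ℝ) ^ 2 / (2 * c)) * Real.exp (c / 2 * t ^ 2) := by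
  have h1 : (1 + t) ^ M ≤ Real.exp ((M : ℝ) * t) := by
    calc (1 + t) ^ M ≤ (Real.exp t) ^ M :=
        pow_le_pow_left₀ (by linarith) (by linarith [Real.add_one_le_exp t]) M
      _ = Real.exp ((M : ℝ) * t) := by rw [← Real.exp_nat_mul]
  refine h1.trans ?_
  rw [← Real.exp_add]
  apply Real.exp_le_exp.mpr
  rw [div_add' _ _ _ (by positivity)]
  rw [le_div_iff₀ (by positivity)]
  nlinarith [sq_nonneg (c * t - (M : ℝ))]

lemma core_bound (k : ℕ) (P : MvPolynomial (Fin k) ℝ) (c : ℝ) (hc : 0 < c) (j : ℕ) :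
    ∃ C > 0, ∀ x : EuclideanSpace ℝ (Fin k),
      ‖iteratedFDeriv ℝ j
          (fun w : EuclideanSpace ℝ (Fin k) =>
            MvPolynomial.eval (fun a => w a) P * Real.exp (-c * ‖w‖ ^ 2)) x‖ ≤
        C * Real.exp (-(c / 2) * ‖x‖ ^ 2) := by
  have hfP := poly_tg k P
  have hG : ContDiff ℝ (⊤ : ℕ∞) (fun w : EuclideanSpace ℝ (Fin k) => Real.exp (-c * ‖w‖ ^ 2)) :=
    (contDiff_const.mul (contDiff_norm_sq ℝ)).exp
  obtain ⟨N, A, hA0, hA⟩ := hfP.norm_iteratedFDeriv_le_uniform j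
  set M : ℕ := N + j with hM
  set B : ℝ := 2 ^ j * A * (j.factorial : ℝ) * (max 1 c) ^ j * 2 ^ j with hB
  have hB0 : 0 ≤ B := by positivity
  set K : ℝ := B * Real.exp ((M : ℝ) ^ 2 / (2 * c)) with hK
  refine ⟨K + 1, by positivity, fun x => ?_⟩
  have hx0 : (0:ℝ) ≤ ‖x‖ := norm_nonneg x
  have hx1 : (1:ℝ) ≤ 1 + ‖x‖ := by linarith
  have hmul := norm_iteratedFDeriv_mul_le (𝕜 := ℝ) (N := ((⊤ : ℕ∞) : WithTop ℕ∞))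
    hfP.1 hG x (n := j) (by exact_mod_cast le_top)
  have hterm : ∀ i ∈ Finset.range (j + 1),
      (j.choose i : ℝ) * ‖iteratedFDeriv ℝ i
          (fun w : EuclideanSpace ℝ (Fin k) => MvPolynomial.eval (fun a => w a) P) x‖ *
        ‖iteratedFDeriv ℝ (j - i)
          (fun w : EuclideanSpace ℝ (Fin k) => Real.exp (-c * ‖w‖ ^ 2)) x‖ ≤
      (j.choose i : ℝ) * (A * (1 + ‖x‖) ^ N *
        ((j.factorial : ℝ) * (max 1 c) ^ j * (2 * (1 + ‖x‖)) ^ j * Real.exp (-c * ‖x‖ ^ 2))) := by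
    intro i hi
    have hij : i ≤ j := by have := Finset.mem_range.mp hi; omega
    have h1 := hA i hij x
    have h2 := gauss_deriv_bound c hc (j - i) x
    have h2' : ‖iteratedFDeriv ℝ (j - i)
          (fun w : EuclideanSpace ℝ (Fin k) => Real.exp (-c * ‖w‖ ^ 2)) x‖ ≤
        (j.factorial : ℝ) * (max 1 c) ^ j * (2 * (1 + ‖x‖)) ^ j * Real.exp (-c * ‖x‖ ^ 2) := by
      refine h2.trans ?_
      have hf1 : ((j - i).factorial : ℝ) ≤ (j.factorial : ℝ) := by
        exact_mod_cast Nat.factorial_le (by omega)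
      gcongr <;> first
        | omega
        | exact le_max_left 1 c
        | exact hf1
        | linarith
    rw [mul_assoc]
    refine mul_le_mul_of_nonneg_left ?_ (by positivity)
    exact mul_le_mul h1 h2' (norm_nonneg _) (by positivity)
  refine hmul.trans ?_
  have hsum : (∑ i ∈ Finset.range (j + 1), (j.choose i : ℝ) * ‖iteratedFDeriv ℝ i
          (fun w : EuclideanSpace ℝ (Fin k) => MvPolynomial.eval (fun a => w a) P) x‖ *
        ‖iteratedFDeriv ℝ (j - i)
          (fun w : EuclideanSpace ℝ (Fin k) => Real.exp (-c * ‖w‖ ^ 2)) x‖) ≤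
      (2 ^ j : ℝ) * (A * (1 + ‖x‖) ^ N *
        ((j.factorial : ℝ) * (max 1 c) ^ j * (2 * (1 + ‖x‖)) ^ j * Real.exp (-c * ‖x‖ ^ 2))) := by
    refine (Finset.sum_le_sum hterm).trans ?_
    rw [← Finset.sum_mul]
    have : (∑ i ∈ Finset.range (j + 1), (j.choose i : ℝ)) = (2 ^ j : ℝ) := by
      norm_cast; exact Nat.sum_range_choose j
    rw [this]
  refine hsum.trans ?_
  have hrw : (2 ^ j : ℝ) * (A * (1 + ‖x‖) ^ N *
        ((j.factorial : ℝ) * (max 1 c) ^ j * (2 * (1 + ‖x‖)) ^ j * Real.exp (-c * ‖x‖ ^ 2))) =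
      B * ((1 + ‖x‖) ^ M * Real.exp (-c * ‖x‖ ^ 2)) := by
    rw [hB, hM, mul_pow, pow_add]; ring
  rw [hrw]
  have hp := exp_poly_bound M c hc ‖x‖ hx0
  have hexp : Real.exp (c / 2 * ‖x‖ ^ 2) * Real.exp (-c * ‖x‖ ^ 2) =
      Real.exp (-(c / 2) * ‖x‖ ^ 2) := by
    rw [← Real.exp_add]; ring_nf
  calc B * ((1 + ‖x‖) ^ M * Real.exp (-c * ‖x‖ ^ 2))
      ≤ B * ((Real.exp ((M : ℝ) ^ 2 / (2 * c)) * Real.exp (c / 2 * ‖x‖ ^ 2)) *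
          Real.exp (-c * ‖x‖ ^ 2)) := by
        refine mul_le_mul_of_nonneg_left ?_ hB0
        exact mul_le_mul_of_nonneg_right hp (Real.exp_pos _).le
    _ = K * (Real.exp (c / 2 * ‖x‖ ^ 2) * Real.exp (-c * ‖x‖ ^ 2)) := by rw [hK]; ring
    _ = K * Real.exp (-(c / 2) * ‖x‖ ^ 2) := by rw [hexp]
    _ ≤ (K + 1) * Real.exp (-(c / 2) * ‖x‖ ^ 2) := by
        have := (Real.exp_pos (-(c / 2) * ‖x‖ ^ 2)).le
        nlinarith

end Aux


theorem stmt8 (k d : ℕ) (P : MvPolynomial (Fin k) ℝ) (hdeg : P.totalDegree ≤ d)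
    (c : ℝ) (hc : 0 < c) (r' : ℕ) :
    ∃ C > 0, ∀ p : ℕ, 1 ≤ p → ∀ z : EuclideanSpace ℝ (Fin k), ∀ j ≤ r',
      ‖iteratedFDeriv ℝ j
          (fun w : EuclideanSpace ℝ (Fin k) =>
            MvPolynomial.eval (fun a => Real.sqrt p * w a) P *
              Real.exp (-c * p * ‖w‖ ^ 2)) z‖ ≤
        C * (p : ℝ) ^ ((r' : ℝ) / 2) * Real.exp (-(c / 2) * p * ‖z‖ ^ 2) := by
  classical
  choose Cf hCfpos hCf using core_bound k P c hc
  set f : EuclideanSpace ℝ (Fin k) → ℝ :=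
    fun w => MvPolynomial.eval (fun a => w a) P * Real.exp (-c * ‖w‖ ^ 2) with hfdef
  have hfP : Function.HasTemperateGrowth
      (fun w : EuclideanSpace ℝ (Fin k) => MvPolynomial.eval (fun a => w a) P) := poly_tg k P
  have hf : ContDiff ℝ (⊤ : ℕ∞) f :=
    hfP.1.mul ((contDiff_const.mul (contDiff_norm_sq ℝ)).exp)
  set Ctot : ℝ := ∑ i ∈ Finset.range (r' + 1), Cf i with hCtot
  have hCtot_pos : 0 < Ctot :=
    Finset.sum_pos (fun i _ => hCfpos i) ⟨0, Finset.mem_range.mpr (by omega)⟩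
  refine ⟨Ctot, hCtot_pos, fun p hp z j hj => ?_⟩
  have hp0 : (0:ℝ) ≤ (p:ℝ) := by positivity
  have hp1 : (1:ℝ) ≤ (p:ℝ) := by exact_mod_cast hp
  set s : ℝ := Real.sqrt p with hs
  have hs0 : 0 ≤ s := Real.sqrt_nonneg _
  have hs2 : s ^ 2 = (p:ℝ) := Real.sq_sqrt hp0
  have hs1 : 1 ≤ s := by nlinarith
  set L : EuclideanSpace ℝ (Fin k) →L[ℝ] EuclideanSpace ℝ (Fin k) :=
    s • ContinuousLinearMap.id ℝ (EuclideanSpace ℝ (Fin k)) with hL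
  have hLapp : ∀ w, L w = s • w := fun w => rfl
  have hLnormsq : ∀ w : EuclideanSpace ℝ (Fin k), ‖L w‖ ^ 2 = (p:ℝ) * ‖w‖ ^ 2 := by
    intro w
    rw [hLapp, norm_smul, Real.norm_eq_abs, abs_of_nonneg hs0, mul_pow, hs2]
  have hfunext : (fun w : EuclideanSpace ℝ (Fin k) =>
      MvPolynomial.eval (fun a => Real.sqrt p * w a) P * Real.exp (-c * p * ‖w‖ ^ 2)) =
      f ∘ L := by
    funext w
    have h1 : (fun a => Real.sqrt p * w a) = fun a => (L w) a := by
      funext a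
      rw [hLapp]
      simp [hs]
    have h2 : Real.exp (-c * p * ‖w‖ ^ 2) = Real.exp (-c * ‖L w‖ ^ 2) := by
      rw [hLnormsq w]
      congr 1
      ring
    simp only [Function.comp_apply, hfdef]
    rw [h1, h2]
  rw [hfunext, ContinuousLinearMap.iteratedFDeriv_comp_right L hf z (by exact_mod_cast le_top)]
  refine (ContinuousMultilinearMap.norm_compContinuousLinearMap_le _ _).trans ?_
  have hLn : ‖L‖ ≤ s := by
    rw [hL]
    refine (norm_smul_le s (ContinuousLinearMap.id ℝ (EuclideanSpace ℝ (Fin k)))).trans ?_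
    calc ‖s‖ * ‖ContinuousLinearMap.id ℝ (EuclideanSpace ℝ (Fin k))‖
        ≤ ‖s‖ * 1 := mul_le_mul_of_nonneg_left ContinuousLinearMap.norm_id_le (norm_nonneg s)
      _ = s := by rw [mul_one, Real.norm_eq_abs, abs_of_nonneg hs0]
  have hprod : (∏ _i : Fin j, ‖L‖) ≤ s ^ r' := by
    rw [Finset.prod_const, Finset.card_univ, Fintype.card_fin]
    calc ‖L‖ ^ j ≤ s ^ j := pow_le_pow_left₀ (norm_nonneg _) hLn j
      _ ≤ s ^ r' := pow_le_pow_right₀ hs1 hj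
  have hsr : s ^ r' = (p:ℝ) ^ ((r' : ℝ) / 2) := by
    rw [hs, Real.sqrt_eq_rpow, ← Real.rpow_natCast ((p:ℝ) ^ ((1:ℝ)/2)) r',
      ← Real.rpow_mul hp0]
    congr 1
    push_cast
    ring
  have h1 : ‖iteratedFDeriv ℝ j f (L z)‖ ≤ Cf j * Real.exp (-(c / 2) * p * ‖z‖ ^ 2) := by
    have := hCf j (L z)
    rwa [hLnormsq z, show -(c/2) * ((p:ℝ) * ‖z‖^2) = -(c/2) * p * ‖z‖^2 by ring] at this
  have hCj : Cf j ≤ Ctot :=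
    Finset.single_le_sum (f := Cf) (fun i _ => (hCfpos i).le)
      (Finset.mem_range.mpr (by omega))
  have hexp0 : (0:ℝ) ≤ Real.exp (-(c / 2) * p * ‖z‖ ^ 2) := (Real.exp_pos _).le
  calc ‖iteratedFDeriv ℝ j f (L z)‖ * ∏ _i : Fin j, ‖L‖
      ≤ (Cf j * Real.exp (-(c / 2) * p * ‖z‖ ^ 2)) * s ^ r' :=
        mul_le_mul h1 hprod (Finset.prod_nonneg fun _ _ => norm_nonneg _) (mul_nonneg (hCfpos j).le hexp0)
    _ = Cf j * s ^ r' * Real.exp (-(c / 2) * p * ‖z‖ ^ 2) := by ring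
    _ ≤ Ctot * s ^ r' * Real.exp (-(c / 2) * p * ‖z‖ ^ 2) := by
        have hsr0 : 0 ≤ s ^ r' := by positivity
        gcongr
    _ = Ctot * (p : ℝ) ^ ((r' : ℝ) / 2) * Real.exp (-(c / 2) * p * ‖z‖ ^ 2) := by rw [hsr]
end

section
/- Suppose c : ℕ → ℝ is finitely supported, m ≥ 1, and λ is an m-th root of unity with λ ≠ 1, and assume ∑_i c_i i^k λ^i = 0 for 0 ≤ k ≤ K. Fix 0 ≤ l ≤ K and a function η = η(z) taking values in (0,1] with 1 − η(z) ≥ c₀|z|² for some c₀ > 0, on |z| ≤ ε. Then there is C > 0 such that for all integers p ≥ 1 and |z| ≤ ε: |∑_i c_i i^l λ^{i} η(z)^{p+i}| ≤ C · p^{l − K − 1} · η(z)^{3p/4}. -/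
open Real Finset Polynomial

lemma stmt9_aux (x : ℝ) (hx0 : 0 < x) (hx1 : x ≤ 1) (s p : ℕ) (hs : 1 ≤ s) (hp : 1 ≤ p) :
    x ^ p * (1 - x) ^ s ≤ (4 * s : ℝ) ^ s / p ^ s * x ^ ((3 * (p : ℝ)) / 4) := by
  set t : ℝ := 1 - x with ht
  have ht0 : 0 ≤ t := by simp [ht]; linarith
  have hsR : (0:ℝ) < s := by exact_mod_cast hs
  have hpR : (0:ℝ) < p := by exact_mod_cast hp
  have hexp : t * p / (4 * s) ≤ Real.exp (t * p / (4 * s)) := by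
    have := Real.add_one_le_exp (t * p / (4 * s)); linarith
  have hkey : (t * p / (4 * s)) ^ s ≤ Real.exp (t * p / 4) := by
    calc (t * p / (4 * s)) ^ s ≤ (Real.exp (t * p / (4 * s))) ^ s := by
          apply pow_le_pow_left₀ (by positivity) hexp
      _ = Real.exp (t * p / 4) := by
          rw [← Real.exp_nat_mul]; congr 1; field_simp
  have hkey2 : t ^ s * Real.exp (-(t * p / 4)) ≤ (4 * s : ℝ) ^ s / p ^ s := by
    have h1 : t ^ s = (t * p / (4 * s)) ^ s * ((4 * s) / p) ^ s := by
      rw [← mul_pow]; congr 1; field_simp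
    rw [h1]
    calc (t * p / (4 * s)) ^ s * ((4 * s) / p) ^ s * Real.exp (-(t * p / 4))
        ≤ Real.exp (t * p / 4) * ((4 * s) / p) ^ s * Real.exp (-(t * p / 4)) := by
          apply mul_le_mul_of_nonneg_right _ (Real.exp_nonneg _)
          exact mul_le_mul_of_nonneg_right hkey (by positivity)
      _ = ((4 * s) / p) ^ s := by
          rw [mul_comm, ← mul_assoc, ← Real.exp_add]; simp
      _ = (4 * s : ℝ) ^ s / p ^ s := div_pow _ _ _
  have hxe : x ^ ((p : ℝ) / 4) ≤ Real.exp (-(t * p / 4)) := by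
    have h2 : x ≤ Real.exp (-t) := by
      have := Real.add_one_le_exp (-t); linarith
    calc x ^ ((p : ℝ) / 4) ≤ (Real.exp (-t)) ^ ((p : ℝ) / 4) :=
          Real.rpow_le_rpow hx0.le h2 (by positivity)
      _ = Real.exp (-(t * p / 4)) := by
          rw [← Real.exp_mul]; ring_nf
  have hsplit : x ^ p = x ^ ((3 * (p : ℝ)) / 4) * x ^ ((p : ℝ) / 4) := by
    rw [← Real.rpow_add hx0, ← Real.rpow_natCast x p]; ring_nf
  rw [hsplit]
  calc x ^ ((3 * (p : ℝ)) / 4) * x ^ ((p : ℝ) / 4) * t ^ s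
      = x ^ ((3 * (p : ℝ)) / 4) * (x ^ ((p : ℝ) / 4) * t ^ s) := by ring
    _ ≤ x ^ ((3 * (p : ℝ)) / 4) * ((4 * s : ℝ) ^ s / p ^ s) := by
        apply mul_le_mul_of_nonneg_left _ (by positivity)
        calc x ^ ((p : ℝ) / 4) * t ^ s ≤ Real.exp (-(t * p / 4)) * t ^ s :=
              mul_le_mul_of_nonneg_right hxe (by positivity)
          _ ≤ (4 * s : ℝ) ^ s / p ^ s := by rw [mul_comm]; exact hkey2
    _ = (4 * s : ℝ) ^ s / p ^ s * x ^ ((3 * (p : ℝ)) / 4) := mul_comm _ _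

theorem stmt9 (c : ℕ →₀ ℝ) (m K : ℕ) (hm : 1 ≤ m) (ζ : ℂ)
    (hζ : ζ ^ m = 1) (hζ1 : ζ ≠ 1)
    (hmom : ∀ k ≤ K, ∑ i ∈ c.support, (c i : ℂ) * (i : ℂ) ^ k * ζ ^ i = 0)
    (l : ℕ) (hl : l ≤ K)
    (n : ℕ) (η : EuclideanSpace ℂ (Fin n) → ℝ) (ε c₀ : ℝ) (hε : 0 < ε) (hc₀ : 0 < c₀)
    (hη : ∀ z, ‖z‖ ≤ ε → 0 < η z ∧ η z ≤ 1 ∧ c₀ * ‖z‖ ^ 2 ≤ 1 - η z) :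
    ∃ C > 0, ∀ p : ℕ, 1 ≤ p → ∀ z, ‖z‖ ≤ ε →
      ‖∑ i ∈ c.support, (c i : ℂ) * (i : ℂ) ^ l * ζ ^ i * (η z : ℂ) ^ (p + i)‖ ≤
        C * (p : ℝ) ^ ((l : ℝ) - K - 1) * η z ^ ((3 * (p : ℝ)) / 4) := by
  classical
  set s := K - l + 1 with hs_def
  have hs1 : 1 ≤ s := Nat.le_add_left 1 _
  set a : ℕ → ℂ := fun i => (c i : ℂ) * (i : ℂ) ^ l * ζ ^ i with ha
  -- moments of any polynomial of degree ≤ K vanish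
  have hB : ∀ Q : Polynomial ℂ, Q.natDegree ≤ K →
      ∑ i ∈ c.support, (c i : ℂ) * Q.eval (i : ℂ) * ζ ^ i = 0 := by
    intro Q hQ
    calc ∑ i ∈ c.support, (c i : ℂ) * Q.eval (i : ℂ) * ζ ^ i
        = ∑ i ∈ c.support, ∑ k ∈ Finset.range (K + 1),
            Q.coeff k * ((c i : ℂ) * (i : ℂ) ^ k * ζ ^ i) := by
          refine Finset.sum_congr rfl fun i _ => ?_
          rw [Polynomial.eval_eq_sum_range' (Nat.lt_succ_of_le hQ), Finset.mul_sum, Finset.sum_mul]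
          exact Finset.sum_congr rfl fun k _ => by ring
      _ = ∑ k ∈ Finset.range (K + 1), Q.coeff k *
            ∑ i ∈ c.support, ((c i : ℂ) * (i : ℂ) ^ k * ζ ^ i) := by
          rw [Finset.sum_comm]
          exact Finset.sum_congr rfl fun k _ => by rw [Finset.mul_sum]
      _ = 0 := by
          refine Finset.sum_eq_zero fun k hk => ?_
          rw [hmom k (Nat.lt_succ_iff.mp (Finset.mem_range.mp hk)), mul_zero]
  set T : ℕ → ℂ := fun j => ∑ i ∈ c.support, a i * (i.choose j : ℂ) with hT
  have hT0 : ∀ j < s, T j = 0 := by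
    intro j hj
    have hjK : l + j ≤ K := by omega
    set Q : Polynomial ℂ := X ^ l * descPochhammer ℂ j with hQ
    have hQdeg : Q.natDegree ≤ K := by
      rw [hQ, Polynomial.natDegree_mul (pow_ne_zero _ Polynomial.X_ne_zero)
        (monic_descPochhammer ℂ j).ne_zero, Polynomial.natDegree_X_pow,
        descPochhammer_natDegree]
      exact hjK
    have hfac : (j.factorial : ℂ) * T j = ∑ i ∈ c.support, (c i : ℂ) * Q.eval (i : ℂ) * ζ ^ i := by
      rw [hT, Finset.mul_sum]
      refine Finset.sum_congr rfl fun i _ => ?_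
      have he : Q.eval (i : ℂ) = (i : ℂ) ^ l * (i.descFactorial j : ℂ) := by
        rw [hQ, Polynomial.eval_mul, Polynomial.eval_pow, Polynomial.eval_X,
          descPochhammer_eval_eq_descFactorial]
      rw [he, ha]
      push_cast [Nat.descFactorial_eq_factorial_mul_choose]
      ring
    have := hB Q hQdeg
    rw [← hfac] at this
    exact (mul_eq_zero.mp this).resolve_left (by exact_mod_cast (Nat.factorial_ne_zero j))
  set N := c.support.sup id + 1 with hN_def
  have hiN : ∀ i ∈ c.support, i < N := fun i hi =>
    Nat.lt_succ_of_le (Finset.le_sup (f := id) hi)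
  have hg : ∀ x : ℂ, ∑ i ∈ c.support, a i * x ^ i
      = ∑ j ∈ Finset.range N, (x - 1) ^ j * T j := by
    intro x
    calc ∑ i ∈ c.support, a i * x ^ i
        = ∑ i ∈ c.support, ∑ j ∈ Finset.range N, a i * ((x - 1) ^ j * (i.choose j : ℂ)) := by
          refine Finset.sum_congr rfl fun i hi => ?_
          have hx : x ^ i = ∑ j ∈ Finset.range N, (x - 1) ^ j * (i.choose j : ℂ) := by
            have h1 : x ^ i = ((x - 1) + 1) ^ i := by ring_nf
            rw [h1, add_pow]
            simp only [one_pow, mul_one]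
            apply Finset.sum_subset (Finset.range_subset_range.mpr (hiN i hi))
            intro j _ hj
            have hij : i < j := by
              simp only [Finset.mem_range, not_lt] at hj; omega
            simp [Nat.choose_eq_zero_of_lt hij]
          rw [hx, Finset.mul_sum]
      _ = ∑ j ∈ Finset.range N, (x - 1) ^ j * T j := by
          rw [Finset.sum_comm]
          refine Finset.sum_congr rfl fun j _ => ?_
          rw [hT, Finset.mul_sum]
          exact Finset.sum_congr rfl fun i _ => by ring
  set M := ∑ j ∈ Finset.range N, ‖T j‖ with hM
  have hM0 : 0 ≤ M := Finset.sum_nonneg fun j _ => norm_nonneg _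
  refine ⟨(M + 1) * (4 * s : ℝ) ^ s, by positivity, ?_⟩
  intro p hp z hz
  obtain ⟨hx0, hx1, -⟩ := hη z hz
  set x := η z with hx
  have hgb : ‖∑ j ∈ Finset.range N, ((x : ℂ) - 1) ^ j * T j‖
      ≤ (1 - x) ^ s * M := by
    calc ‖∑ j ∈ Finset.range N, ((x : ℂ) - 1) ^ j * T j‖
        ≤ ∑ j ∈ Finset.range N, ‖((x : ℂ) - 1) ^ j * T j‖ :=
          norm_sum_le _ _
      _ ≤ ∑ j ∈ Finset.range N, (1 - x) ^ s * ‖T j‖ := by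
          refine Finset.sum_le_sum fun j _ => ?_
          rw [norm_mul, norm_pow]
          have habs : ‖(x : ℂ) - 1‖ = 1 - x := by
            rw [show ((x : ℂ) - 1) = (((x - 1 : ℝ)) : ℂ) by push_cast; ring,
              Complex.norm_real, Real.norm_eq_abs, abs_of_nonpos (by linarith)]
            ring
          rw [habs]
          by_cases hjs : j < s
          · rw [hT0 j hjs]; simp
          · have : (1 - x) ^ j ≤ (1 - x) ^ s :=
              pow_le_pow_of_le_one (by linarith) (by linarith) (le_of_not_gt hjs)
            exact mul_le_mul_of_nonneg_right this (norm_nonneg _)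
      _ = (1 - x) ^ s * M := by rw [hM, Finset.mul_sum]
  have hsum : ∑ i ∈ c.support, (c i : ℂ) * (i : ℂ) ^ l * ζ ^ i * ((x : ℂ)) ^ (p + i)
      = (x : ℂ) ^ p * ∑ j ∈ Finset.range N, ((x : ℂ) - 1) ^ j * T j := by
    rw [← hg, Finset.mul_sum]
    exact Finset.sum_congr rfl fun i _ => by rw [pow_add]; ring
  rw [hsum, norm_mul, norm_pow, Complex.norm_real, Real.norm_eq_abs, abs_of_pos hx0]
  have hpr : (p : ℝ) ^ ((l : ℝ) - K - 1) = 1 / (p : ℝ) ^ s := by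
    have h1 : (l : ℝ) - K - 1 = -((s : ℕ) : ℝ) := by
      rw [hs_def]; push_cast [Nat.cast_sub hl]; ring
    rw [h1, Real.rpow_neg (Nat.cast_nonneg p), Real.rpow_natCast, one_div]
  have hpR : (0 : ℝ) < (p : ℝ) ^ s := by positivity
  calc x ^ p * ‖∑ j ∈ Finset.range N, ((x : ℂ) - 1) ^ j * T j‖
      ≤ x ^ p * ((1 - x) ^ s * M) :=
        mul_le_mul_of_nonneg_left hgb (pow_nonneg hx0.le p)
    _ = (x ^ p * (1 - x) ^ s) * M := by ring
    _ ≤ ((4 * s : ℝ) ^ s / p ^ s * x ^ ((3 * (p : ℝ)) / 4)) * M :=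
        mul_le_mul_of_nonneg_right (stmt9_aux x hx0 hx1 s p hs1 hp) hM0
    _ ≤ (M + 1) * (4 * s : ℝ) ^ s * (p : ℝ) ^ ((l : ℝ) - K - 1) * x ^ ((3 * (p : ℝ)) / 4) := by
        rw [hpr]
        have hgoal : (4 * s : ℝ) ^ s / p ^ s * x ^ ((3 * (p : ℝ)) / 4) * M
            ≤ (M + 1) * (4 * s : ℝ) ^ s * (1 / (p : ℝ) ^ s) * x ^ ((3 * (p : ℝ)) / 4) := by
          rw [show (M + 1) * (4 * s : ℝ) ^ s * (1 / (p : ℝ) ^ s) * x ^ ((3 * (p : ℝ)) / 4)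
              = (4 * s : ℝ) ^ s / p ^ s * x ^ ((3 * (p : ℝ)) / 4) * (M + 1) by ring]
          apply mul_le_mul_of_nonneg_left (by linarith)
          positivity
        exact hgoal
end

section
/- Let m ≥ 2, λ a primitive m-th root of unity, and let c_i be positive reals indexed by a finite set satisfying the balancing condition (1/m)∑_i i^k c_i = ∑_{i ≡ u mod m} i^k c_i for all residues u and all 0 ≤ k ≤ K. Then for every u ∈ {1,…,m−1}, the polynomial Q(η) = ∑_i c_i λ^{u i} η^i satisfies Q(1) = Q'(1) = ⋯ = Q^{(K)}(1) = 0. -/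
open Polynomial Finset

theorem stmt14 (m : ℕ) (hm : 2 ≤ m) (ζ : ℂ) (hroot : ζ ^ m = 1)
    (hprim : ∀ k : ℕ, 1 ≤ k → k < m → ζ ^ k ≠ 1)
    (c : ℕ →₀ ℝ) (hpos : ∀ i ∈ c.support, 0 < c i) (K : ℕ)
    (hbal : ∀ k ≤ K, ∀ u : ℕ,
      (1 / (m : ℝ)) * ∑ i ∈ c.support, (i : ℝ) ^ k * c i =
        ∑ i ∈ c.support.filter (fun i => i % m = u % m), (i : ℝ) ^ k * c i) :
    ∀ u : ℕ, 1 ≤ u → u ≤ m - 1 → ∀ j ≤ K,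
      (Polynomial.derivative^[j]
        (∑ i ∈ c.support,
          Polynomial.C ((c i : ℂ) * ζ ^ (u * i)) * Polynomial.X ^ i)).eval 1 = 0 := by
  intro u hu1 hu2 j hj
  have hm0 : 0 < m := by omega
  set w : ℂ := ζ ^ u with hw
  have hwm : w ^ m = 1 := by rw [hw, ← pow_mul, mul_comm, pow_mul, hroot, one_pow]
  have hw1 : w ≠ 1 := hprim u hu1 (by omega)
  have hgeom : ∑ r ∈ Finset.range m, w ^ r = 0 := by
    rw [geom_sum_eq hw1 m, hwm, sub_self, zero_div]
  have hzeta : ∀ i : ℕ, ζ ^ (u * i) = w ^ (i % m) := by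
    intro i
    conv_lhs => rw [← Nat.mod_add_div i m]
    rw [Nat.mul_add, pow_add, show u * (m * (i / m)) = m * (u * (i / m)) by ring,
      ← pow_mul, pow_mul ζ m, hroot, one_pow, mul_one]
  -- main vanishing for monomials
  have key : ∀ k ≤ K, ∑ i ∈ c.support, (c i : ℂ) * ζ ^ (u * i) * (i : ℂ) ^ k = 0 := by
    intro k hk
    have hsplit :
        ∑ i ∈ c.support, (c i : ℂ) * ζ ^ (u * i) * (i : ℂ) ^ k
          = ∑ r ∈ Finset.range m, ∑ i ∈ c.support.filter (fun i => i % m = r),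
              (c i : ℂ) * ζ ^ (u * i) * (i : ℂ) ^ k := by
      rw [Finset.sum_fiberwise_of_maps_to]
      intro i _; exact Finset.mem_range.2 (Nat.mod_lt i hm0)
    have hinner : ∀ r ∈ Finset.range m,
        ∑ i ∈ c.support.filter (fun i => i % m = r),
            (c i : ℂ) * ζ ^ (u * i) * (i : ℂ) ^ k
          = w ^ r * (((1 / (m : ℝ)) * ∑ i ∈ c.support, (i : ℝ) ^ k * c i : ℝ) : ℂ) := by
      intro r hr
      have hrm : r % m = r := Nat.mod_eq_of_lt (Finset.mem_range.1 hr)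
      have := hbal k hk r
      rw [hrm] at this
      rw [this]
      push_cast
      rw [Finset.mul_sum, Finset.sum_congr rfl]
      intro i hi
      have hi2 : i % m = r := (Finset.mem_filter.1 hi).2
      rw [hzeta i, hi2]
      ring
    rw [hsplit, Finset.sum_congr rfl hinner, ← Finset.sum_mul, hgeom, zero_mul]
  -- vanishing for any polynomial of natDegree ≤ K
  have poly : ∀ p : ℂ[X], p.natDegree ≤ K →
      ∑ i ∈ c.support, (c i : ℂ) * ζ ^ (u * i) * p.eval (i : ℂ) = 0 := by
    intro p hp
    have : ∀ i ∈ c.support, (c i : ℂ) * ζ ^ (u * i) * p.eval (i : ℂ)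
        = ∑ k ∈ Finset.range (K + 1), p.coeff k * ((c i : ℂ) * ζ ^ (u * i) * (i : ℂ) ^ k) := by
      intro i _
      rw [eval_eq_sum_range' (Nat.lt_succ_of_le hp), Finset.mul_sum]
      exact Finset.sum_congr rfl fun k _ => by ring
    rw [Finset.sum_congr rfl this, Finset.sum_comm]
    refine Finset.sum_eq_zero fun k hk => ?_
    rw [← Finset.mul_sum, key k (Nat.lt_succ_iff.1 (Finset.mem_range.1 hk)), mul_zero]
  -- compute the iterated derivative evaluation
  have heval :
      (Polynomial.derivative^[j]
        (∑ i ∈ c.support, Polynomial.C ((c i : ℂ) * ζ ^ (u * i)) * Polynomial.X ^ i)).eval 1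
      = ∑ i ∈ c.support, (c i : ℂ) * ζ ^ (u * i) * (descPochhammer ℂ j).eval (i : ℂ) := by
    rw [Polynomial.iterate_derivative_sum, Polynomial.eval_finset_sum]
    refine Finset.sum_congr rfl fun i _ => ?_
    rw [Polynomial.iterate_derivative_C_mul, Polynomial.iterate_derivative_X_pow_eq_C_mul,
      descPochhammer_eval_eq_descFactorial]
    simp [mul_comm, mul_assoc, mul_left_comm]
  rw [heval]
  exact poly _ (by rw [descPochhammer_natDegree]; exact hj)
end
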